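/- Let a partition of E(K_n) into color classes be given where every class is a forest and the union of any two classes contains a cycle, and suppose some class M is a perfect matching of size x on a set S of 2x vertices. Then the number of classes other than M is at most x(n−2x) + x(x−1), so the total number of classes is at most x·n − x² − x + 1. -/

import Mathlib

open SimpleGraph

/-- A partition of the edge set of `G` into `k` nonempty forests (acyclic classes)
such that the union of any two distinct parts contains a cycle. -/
def IsCompleteForestPartition {V : Type*} (G : SimpleGraph V) (k : ℕ)
    (P : Fin k → Set (Sym2 V)) : Prop :=
  (∀ i, (P i).Nonempty) ∧
  (∀ i j, i ≠ j → Disjoint (P i) (P j)) ∧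
  (⋃ i, P i) = G.edgeSet ∧
  (∀ i, (SimpleGraph.fromEdgeSet (P i)).IsAcyclic) ∧
  (∀ i j, i ≠ j → ¬ (SimpleGraph.fromEdgeSet (P i ∪ P j)).IsAcyclic)

/-- The achromatic arboricity of `G`: the largest number of parts in a partition of
`E(G)` into forests such that the union of any two parts contains a cycle. -/
noncomputable def achromaticArboricity {V : Type*} (G : SimpleGraph V) : ℕ :=
  sSup {k | ∃ P : Fin k → Set (Sym2 V), IsCompleteForestPartition G k P}

lemma cycle_two_edges_at_base {V : Type*} {G : SimpleGraph V} {u : V} (c : G.Walk u u)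
    (hc : c.IsCycle) :
    ∃ e₁ e₂ : Sym2 V, e₁ ≠ e₂ ∧ e₁ ∈ c.edges ∧ e₂ ∈ c.edges ∧ u ∈ e₁ ∧ u ∈ e₂ := by
  cases c with
  | nil => exact absurd rfl hc.ne_nil
  | @cons _ b _ h q =>
    rw [Walk.cons_isCycle_iff] at hc
    obtain ⟨hq, hne⟩ := hc
    obtain ⟨w', h', q', hq'⟩ := Walk.exists_eq_cons_of_ne h.ne q.reverse
    have he₂ : s(u, w') ∈ q.edges := by
      rw [← List.mem_reverse, ← Walk.edges_reverse, hq']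
      simp
    refine ⟨s(u, b), s(u, w'), ?_, ?_, ?_, ?_, ?_⟩
    · exact fun heq => hne (heq ▸ he₂)
    · simp
    · simp [Walk.edges_cons, he₂]
    · simp
    · simp

lemma cycle_edge_at_vertex {V : Type*} [DecidableEq V] {G : SimpleGraph V}
    {v u w : V} (c : G.Walk v v) (hc : c.IsCycle) (he : s(u, w) ∈ c.edges) :
    ∃ e', e' ∈ c.edges ∧ u ∈ e' ∧ e' ≠ s(u, w) := by
  have hu : u ∈ c.support := c.fst_mem_support_of_mem_edges he
  have hd := hc.rotate hu
  obtain ⟨f₁, f₂, hf12, hf₁, hf₂, hu₁, hu₂⟩ := cycle_two_edges_at_base (c.rotate u hu) hd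
  have hrot := c.rotate_edges u hu
  rw [hrot.mem_iff] at hf₁ hf₂
  by_cases h1 : f₁ = s(u, w)
  · exact ⟨f₂, hf₂, hu₂, fun h2 => hf12 (h1.trans h2.symm)⟩
  · exact ⟨f₁, hf₁, hu₁, h1⟩

lemma class_two_edges {V : Type*} [DecidableEq V] {A B : Set (Sym2 V)}
    (hBac : (SimpleGraph.fromEdgeSet B).IsAcyclic)
    (hcyc : ¬ (SimpleGraph.fromEdgeSet (A ∪ B)).IsAcyclic)
    (hmatch : ∀ e ∈ A, ∀ e' ∈ A, e ≠ e' → ∀ v, ¬(v ∈ e ∧ v ∈ e')) :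
    ∃ e₁ e₂ : Sym2 V, e₁ ≠ e₂ ∧ e₁ ∈ B ∧ e₂ ∈ B ∧ ¬e₁.IsDiag ∧ ¬e₂.IsDiag ∧
      (∃ a ∈ e₁, ∃ f ∈ A, a ∈ f) ∧ (∃ a ∈ e₂, ∃ f ∈ A, a ∈ f) := by
  simp only [IsAcyclic, not_forall, not_not] at hcyc
  obtain ⟨v, c, hc⟩ := hcyc
  have hedges : ∀ e ∈ c.edges, (e ∈ A ∪ B) ∧ ¬e.IsDiag := by
    intro e he
    have := c.edges_subset_edgeSet he
    rw [edgeSet_fromEdgeSet] at this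
    exact ⟨this.1, this.2⟩
  by_cases hA : ∀ e ∈ c.edges, e ∉ A
  · exfalso
    have hsub : ∀ e ∈ c.edges, e ∈ (fromEdgeSet B).edgeSet := by
      intro e he
      rw [edgeSet_fromEdgeSet]
      have h2 := hedges e he
      exact ⟨h2.1.resolve_left (hA e he), h2.2⟩
    exact hBac (c.transfer _ hsub) (hc.transfer hsub)
  push_neg at hA
  obtain ⟨e, hec, heA⟩ := hA
  induction e using Sym2.ind with
  | _ u w =>
  have huw : u ≠ w := by
    intro h
    exact (hedges _ hec).2 (by simp [h])
  obtain ⟨e₁, he₁c, hue₁, he₁ne⟩ := cycle_edge_at_vertex c hc hec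
  have hwuc : s(w, u) ∈ c.edges := by rwa [Sym2.eq_swap] at hec
  obtain ⟨e₂, he₂c, hwe₂, he₂ne⟩ := cycle_edge_at_vertex c hc hwuc
  have he₂ne' : e₂ ≠ s(u, w) := by rwa [Sym2.eq_swap] at he₂ne
  have hB : ∀ e', e' ∈ c.edges → u ∈ e' ∨ w ∈ e' → e' ≠ s(u, w) → e' ∈ B := by
    intro e' he'c hmem hne'
    rcases (hedges e' he'c).1 with h | h
    · exfalso
      rcases hmem with hm | hm
      · exact hmatch e' h _ heA hne' u ⟨hm, Sym2.mem_mk_left u w⟩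
      · exact hmatch e' h _ heA hne' w ⟨hm, Sym2.mem_mk_right u w⟩
    · exact h
  have he₁B : e₁ ∈ B := hB e₁ he₁c (Or.inl hue₁) he₁ne
  have he₂B : e₂ ∈ B := hB e₂ he₂c (Or.inr hwe₂) he₂ne'
  refine ⟨e₁, e₂, ?_, he₁B, he₂B, (hedges _ he₁c).2, (hedges _ he₂c).2,
    ⟨u, hue₁, s(u, w), heA, Sym2.mem_mk_left u w⟩,
    ⟨w, hwe₂, s(u, w), heA, Sym2.mem_mk_right u w⟩⟩
  intro h
  apply he₁ne
  rw [← Sym2.mem_and_mem_iff huw]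
  exact ⟨hue₁, h ▸ hwe₂⟩

lemma card_filter_mem_sym2 {V : Type*} [Fintype V] [DecidableEq V] {e : Sym2 V}
    (h : ¬e.IsDiag) : (Finset.univ.filter (· ∈ e)).card = 2 := by
  induction e using Sym2.ind with
  | _ a b =>
  rw [Sym2.mk_isDiag_iff] at h
  have heq : Finset.univ.filter (· ∈ s(a, b)) = {a, b} := by
    ext v; simp [Sym2.mem_iff]
  rw [heq, Finset.card_insert_of_notMem (by simp [h]), Finset.card_singleton]

/-- In a complete acyclic partition of the edges of `K_n` into `k`
classes, if some class `M` is a matching of size `x`, then the number of classes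
other than `M` is at most `x(n−2x) + x(x−1)`, hence `k ≤ xn − x² − x + 1`. -/
theorem classes_bound_of_matching_class (n k x : ℕ) (hn : 5 ≤ n)
    (P : Fin k → Set (Sym2 (Fin n)))
    (hP : IsCompleteForestPartition (⊤ : SimpleGraph (Fin n)) k P)
    (i₀ : Fin k) (hx : (P i₀).ncard = x)
    (hM : ∀ e ∈ P i₀, ∀ e' ∈ P i₀, e ≠ e' → ∀ v : Fin n, ¬(v ∈ e ∧ v ∈ e')) :
    (k : ℤ) - 1 ≤ (x : ℤ) * ((n : ℤ) - 2 * x) + (x : ℤ) * ((x : ℤ) - 1) ∧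
    (k : ℤ) ≤ (x : ℤ) * n - (x : ℤ) ^ 2 - x + 1 := by
  classical
  obtain ⟨hnem, hdisj, hcover, hac, hcyc⟩ := hP
  have hk1 : 1 ≤ k := i₀.pos
  -- the matching as a finset
  have hMsub : P i₀ ⊆ (⊤ : SimpleGraph (Fin n)).edgeSet := by
    rw [← hcover]; exact Set.subset_iUnion P i₀
  have hMdiag : ∀ e ∈ P i₀, ¬e.IsDiag := fun e he =>
    SimpleGraph.not_isDiag_of_mem_edgeSet _ (hMsub he)
  set MF : Finset (Sym2 (Fin n)) := (P i₀).toFinite.toFinset with hMFdef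
  have hmemMF : ∀ e, e ∈ MF ↔ e ∈ P i₀ := fun e => Set.Finite.mem_toFinset _
  have hMFcard : MF.card = x := by
    rw [← hx, Set.ncard_eq_toFinset_card _ (P i₀).toFinite]
  -- the support S of the matching
  set SF : Finset (Fin n) := MF.biUnion (fun e => Finset.univ.filter (· ∈ e)) with hSFdef
  have hmemSF : ∀ v, v ∈ SF ↔ ∃ f ∈ P i₀, v ∈ f := by
    intro v
    simp only [hSFdef, Finset.mem_biUnion, Finset.mem_filter, Finset.mem_univ, true_and]
    constructor
    · rintro ⟨e, he, hv⟩; exact ⟨e, (hmemMF e).1 he, hv⟩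
    · rintro ⟨e, he, hv⟩; exact ⟨e, (hmemMF e).2 he, hv⟩
  have hSFcard : SF.card = 2 * x := by
    rw [hSFdef, Finset.card_biUnion]
    · rw [Finset.sum_congr rfl
        (fun e he => card_filter_mem_sym2 (hMdiag e ((hmemMF e).1 he))),
        Finset.sum_const, hMFcard, smul_eq_mul, mul_comm]
    · intro e he e' he' hne'
      simp only [Function.onFun]
      rw [Finset.disjoint_left]
      intro v hv hv'
      exact hM e ((hmemMF e).1 he) e' ((hmemMF e').1 he') hne' v
        ⟨by simpa using hv, by simpa using hv'⟩
  have h2xn : 2 * x ≤ n := by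
    have := Finset.card_le_univ SF
    rwa [hSFcard, Fintype.card_fin] at this
  -- the two pools of edges
  set T1 : Finset (Sym2 (Fin n)) :=
    Finset.univ.filter (fun e => ¬e.IsDiag ∧ (∃ a ∈ e, a ∈ SF) ∧ (∃ a ∈ e, a ∉ SF)) with hT1def
  set A : Finset (Sym2 (Fin n)) := SF.sym2.filter (fun e => ¬e.IsDiag) with hAdef
  set T2 : Finset (Sym2 (Fin n)) := A \ MF with hT2def
  -- counting T2
  have hMFA : MF ⊆ A := by
    intro e he
    rw [hAdef, Finset.mem_filter, Finset.mem_sym2_iff]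
    refine ⟨fun a ha => (hmemSF a).2 ⟨e, (hmemMF e).1 he, ha⟩, hMdiag e ((hmemMF e).1 he)⟩
  have hT2card : T2.card + x = A.card := by
    rw [hT2def, ← hMFcard]
    exact Finset.card_sdiff_add_card_eq_card hMFA
  have hdiagcard : (SF.sym2.filter (fun e => e.IsDiag)).card = 2 * x := by
    have himg : SF.sym2.filter (fun e => e.IsDiag) = SF.image Sym2.diag := by
      ext e
      rw [Finset.mem_filter, Finset.mem_image]
      constructor
      · rintro ⟨hmem, hd⟩
        induction e using Sym2.ind with
        | _ a b =>
        rw [Sym2.mk_isDiag_iff] at hd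
        subst hd
        exact ⟨a, (Finset.mem_sym2_iff.1 hmem) a (Sym2.mem_mk_left a a), rfl⟩
      · rintro ⟨a, ha, rfl⟩
        exact ⟨Finset.diag_mem_sym2_iff.2 ha, Sym2.diag_isDiag a⟩
    rw [himg, Finset.card_image_of_injective _ Sym2.diag_injective, hSFcard]
  have hchoose : (2 * x + 1).choose 2 = 2 * x * x + x := by
    rw [Nat.choose_two_right]
    rw [show 2 * x + 1 - 1 = 2 * x from rfl,
      show (2 * x + 1) * (2 * x) = (2 * x * x + x) * 2 by ring,
      Nat.mul_div_cancel _ (by norm_num)]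
  have hAcard : 2 * x + A.card = 2 * x * x + x := by
    have hsplit := Finset.card_filter_add_card_filter_not
      (s := SF.sym2) (p := fun e => e.IsDiag)
    rw [hdiagcard, Finset.card_sym2, hSFcard, hchoose] at hsplit
    exact hsplit
  -- counting T1
  have hT1card : T1.card ≤ 2 * x * (n - 2 * x) := by
    set f : Sym2 (Fin n) → Fin n × Fin n := fun e =>
      if h : ∃ p : Fin n × Fin n, e = s(p.1, p.2) ∧ p.1 ∈ SF ∧ p.2 ∉ SF then h.choose
      else (⟨0, by omega⟩, ⟨0, by omega⟩) with hfdef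
    have hspec : ∀ e ∈ T1, e = s((f e).1, (f e).2) ∧ (f e).1 ∈ SF ∧ (f e).2 ∉ SF := by
      intro e he
      rw [hT1def, Finset.mem_filter] at he
      obtain ⟨-, hd, ⟨a, ha, haS⟩, ⟨b, hb, hbS⟩⟩ := he
      have hex : ∃ p : Fin n × Fin n, e = s(p.1, p.2) ∧ p.1 ∈ SF ∧ p.2 ∉ SF := by
        induction e using Sym2.ind with
        | _ u v =>
        rw [Sym2.mem_iff] at ha hb
        rcases ha with rfl | rfl <;> rcases hb with rfl | rfl
        · exact absurd haS hbS
        · exact ⟨(a, b), rfl, haS, hbS⟩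
        · exact ⟨(a, b), Sym2.eq_swap, haS, hbS⟩
        · exact absurd haS hbS
      rw [hfdef]
      simp only [dif_pos hex]
      exact hex.choose_spec
    have hmaps : ∀ e ∈ T1, f e ∈ SF ×ˢ SFᶜ := by
      intro e he
      obtain ⟨-, h1, h2⟩ := hspec e he
      exact Finset.mem_product.2 ⟨h1, Finset.mem_compl.2 h2⟩
    have hinj : Set.InjOn f T1 := by
      intro e he e' he' hfe
      rw [(hspec e he).1, (hspec e' he').1, hfe]
    have := Finset.card_le_card_of_injOn f hmaps hinj
    rwa [Finset.card_product, Finset.card_compl, hSFcard, Fintype.card_fin] at this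
  -- each other class contains two elements of T1 ∪ T2
  set Q : Fin k → Finset (Sym2 (Fin n)) := fun j => (T1 ∪ T2).filter (· ∈ P j) with hQdef
  have hQ2 : ∀ j ∈ Finset.univ.erase i₀, 2 ≤ (Q j).card := by
    intro j hj
    have hji : j ≠ i₀ := (Finset.mem_erase.1 hj).1
    obtain ⟨e₁, e₂, h12, h1B, h2B, h1d, h2d, h1S, h2S⟩ :=
      class_two_edges (hac j) (hcyc i₀ j hji.symm) hM
    have hmemQ : ∀ e, e ∈ P j → ¬e.IsDiag → (∃ a ∈ e, ∃ f ∈ P i₀, a ∈ f) → e ∈ Q j := by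
      intro e heB hed heS
      rw [hQdef, Finset.mem_filter]
      refine ⟨Finset.mem_union.2 ?_, heB⟩
      by_cases hall : ∀ a ∈ e, a ∈ SF
      · right
        rw [hT2def, Finset.mem_sdiff, hAdef, Finset.mem_filter, Finset.mem_sym2_iff]
        refine ⟨⟨hall, hed⟩, fun hmf => ?_⟩
        exact (hdisj i₀ j hji.symm).ne_of_mem ((hmemMF e).1 hmf) heB rfl
      · left
        push_neg at hall
        obtain ⟨a, ha, hf, hfm, haf⟩ := heS
        rw [hT1def, Finset.mem_filter]
        exact ⟨Finset.mem_univ _, hed, ⟨a, ha, (hmemSF a).2 ⟨hf, hfm, haf⟩⟩, hall⟩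
    have h1Q : e₁ ∈ Q j := hmemQ e₁ h1B h1d h1S
    have h2Q : e₂ ∈ Q j := hmemQ e₂ h2B h2d h2S
    exact Finset.one_lt_card.2 ⟨e₁, h1Q, e₂, h2Q, h12⟩
  have hQdisj : ∀ j ∈ Finset.univ.erase i₀, ∀ j' ∈ Finset.univ.erase i₀,
      j ≠ j' → Disjoint (Q j) (Q j') := by
    intro j _ j' _ hjj'
    rw [Finset.disjoint_left]
    intro e he he'
    rw [hQdef, Finset.mem_filter] at he he'
    exact (hdisj j j' hjj').ne_of_mem he.2 he'.2 rfl
  have hsum : 2 * (k - 1) ≤ T1.card + T2.card := by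
    calc 2 * (k - 1) = ∑ _j ∈ Finset.univ.erase i₀, 2 := by
          rw [Finset.sum_const, Finset.card_erase_of_mem (Finset.mem_univ i₀),
            Finset.card_univ, Fintype.card_fin, smul_eq_mul, mul_comm]
      _ ≤ ∑ j ∈ Finset.univ.erase i₀, (Q j).card := Finset.sum_le_sum hQ2
      _ = ((Finset.univ.erase i₀).biUnion Q).card := (Finset.card_biUnion hQdisj).symm
      _ ≤ (T1 ∪ T2).card := Finset.card_le_card (Finset.biUnion_subset.2
          (fun j _ => Finset.filter_subset _ _))
      _ ≤ T1.card + T2.card := Finset.card_union_le _ _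
  -- final arithmetic
  zify [hk1, h2xn] at hsum hT1card
  have hmain : (k : ℤ) - 1 ≤ (x : ℤ) * ((n : ℤ) - 2 * x) + (x : ℤ) * ((x : ℤ) - 1) := by
    have h2 : (T2.card : ℤ) + x = A.card := by exact_mod_cast hT2card
    have h3 : 2 * (x : ℤ) + A.card = 2 * x * x + x := by exact_mod_cast hAcard
    nlinarith [hsum, hT1card, h2, h3]
  exact ⟨hmain, by nlinarith [hmain]⟩
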